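/- The map L : Π(μ,ν) → F(μ,ν), π ↦ ((p_{X×Y₁})_# π, (p_{X₂×Y})_# π), is surjective: every cardinal flow between μ and ν arises as L(π) for some coupling π of μ and ν. -/

import Mathlib

open MeasureTheory ProbabilityTheory
open scoped ENNReal ProbabilityTheory

noncomputable section

variable {X₁ X₂ Y₁ Y₂ : Type*} [MeasurableSpace X₁] [MeasurableSpace X₂]
  [MeasurableSpace Y₁] [MeasurableSpace Y₂]

/-- `π` is a transportation plan (coupling) between `μ` and `ν`. -/
def IsCoupling {A B : Type*} [MeasurableSpace A] [MeasurableSpace B]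
    (π : Measure (A × B)) (μ : Measure A) (ν : Measure B) : Prop :=
  π.map Prod.fst = μ ∧ π.map Prod.snd = ν

/-- The minimal transportation (Wasserstein) cost for the cost `c`. -/
noncomputable def Wc {A B : Type*} [MeasurableSpace A] [MeasurableSpace B]
    (c : A → B → ℝ≥0∞) (μ : Measure A) (ν : Measure B) : ℝ≥0∞ :=
  ⨅ π ∈ {π : Measure (A × B) | IsCoupling π μ ν}, ∫⁻ p, c p.1 p.2 ∂π

/-- `(f1, f2)` is a cardinal flow between `μ ∈ P(X₁ × X₂)` and `ν ∈ P(Y₁ × Y₂)`: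
the marginal of `f1` on `X = X₁ × X₂` is `μ`, the marginal of `f2` on `Y = Y₁ × Y₂` is `ν`,
and `f1`, `f2` have the same marginal on `Y₁ × X₂`. -/
def IsCardinalFlow (μ : Measure (X₁ × X₂)) (ν : Measure (Y₁ × Y₂))
    (f1 : Measure ((X₁ × X₂) × Y₁)) (f2 : Measure (X₂ × (Y₁ × Y₂))) : Prop :=
  f1.map Prod.fst = μ ∧ f2.map Prod.snd = ν ∧
    f1.map (fun p => (p.2, p.1.2)) = f2.map (fun p => (p.2.1, p.1))

/-- The set of cardinal flows between `μ` and `ν`. -/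
def Flows (μ : Measure (X₁ × X₂)) (ν : Measure (Y₁ × Y₂)) :
    Set (Measure ((X₁ × X₂) × Y₁) × Measure (X₂ × (Y₁ × Y₂))) :=
  {F | IsProbabilityMeasure F.1 ∧ IsProbabilityMeasure F.2 ∧ IsCardinalFlow μ ν F.1 F.2}

/-- The cardinal flow functional `CT(f¹,f²) = ∫ c₁ df¹ + ∫ c₂ df²`. -/
noncomputable def CT (c₁ : X₁ → Y₁ → ℝ≥0∞) (c₂ : X₂ → Y₂ → ℝ≥0∞)
    (F : Measure ((X₁ × X₂) × Y₁) × Measure (X₂ × (Y₁ × Y₂))) : ℝ≥0∞ :=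
  ∫⁻ q, c₁ q.1.1 q.2 ∂F.1 + ∫⁻ q, c₂ q.1 q.2.2 ∂F.2

/-- `ζ` is a pivot measure between `μ` and `ν` for the separable cost `c₁ + c₂`:
some optimal cardinal flow glues on `ζ`. -/
def IsPivot (μ : Measure (X₁ × X₂)) (ν : Measure (Y₁ × Y₂))
    (c₁ : X₁ → Y₁ → ℝ≥0∞) (c₂ : X₂ → Y₂ → ℝ≥0∞) (ζ : Measure (Y₁ × X₂)) : Prop :=
  ∃ F ∈ Flows μ ν, F.1.map (fun p => (p.2, p.1.2)) = ζ ∧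
    CT c₁ c₂ F = ⨅ G ∈ Flows μ ν, CT c₁ c₂ G


/-- Mapping the second coordinate of a composition-product. -/
lemma compProd_map_right' {α β γ : Type*} [MeasurableSpace α] [MeasurableSpace β]
    [MeasurableSpace γ] (μ : Measure α) [SFinite μ] (κ : Kernel α β) [IsSFiniteKernel κ]
    {f : β → γ} (hf : Measurable f) :
    (μ ⊗ₘ κ).map (Prod.map id f) = μ ⊗ₘ (κ.map f) := by
  ext s hs
  rw [Measure.map_apply (measurable_id.prodMap hf) hs,
    Measure.compProd_apply (hs.preimage (measurable_id.prodMap hf)),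
    Measure.compProd_apply hs]
  congr 1
  ext a
  rw [Kernel.map_apply' _ hf _ (measurable_prodMk_left hs)]
  rfl

theorem stmt2
    [TopologicalSpace X₁] [PolishSpace X₁] [BorelSpace X₁]
    [TopologicalSpace X₂] [PolishSpace X₂] [BorelSpace X₂]
    [TopologicalSpace Y₁] [PolishSpace Y₁] [BorelSpace Y₁]
    [TopologicalSpace Y₂] [PolishSpace Y₂] [BorelSpace Y₂]
    (μ : Measure (X₁ × X₂)) (ν : Measure (Y₁ × Y₂))
    [IsProbabilityMeasure μ] [IsProbabilityMeasure ν]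
    (f1 : Measure ((X₁ × X₂) × Y₁)) (f2 : Measure (X₂ × (Y₁ × Y₂)))
    (hF : (f1, f2) ∈ Flows μ ν) :
    ∃ π : Measure ((X₁ × X₂) × (Y₁ × Y₂)), IsCoupling π μ ν ∧
      π.map (fun p => (p.1, p.2.1)) = f1 ∧ π.map (fun p => (p.1.2, p.2)) = f2 := by

  obtain ⟨hp1, hp2, h1, h2, h12⟩ := hF
  have hneX : Nonempty (X₁ × X₂) :=
    ⟨(nonempty_of_measure_ne_zero (μ := μ) (s := Set.univ) (by simp)).some⟩
  have hneY : Nonempty (Y₁ × Y₂) :=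
    ⟨(nonempty_of_measure_ne_zero (μ := ν) (s := Set.univ) (by simp)).some⟩
  haveI : Nonempty X₁ := hneX.map Prod.fst
  haveI : Nonempty Y₂ := hneY.map Prod.snd
  -- rearranged measures over the common marginal ζ on Y₁ × X₂
  set ρ₁ : Measure ((Y₁ × X₂) × X₁) :=
    f1.map (fun p => ((p.2, p.1.2), p.1.1)) with hρ₁
  set ρ₂ : Measure ((Y₁ × X₂) × Y₂) :=
    f2.map (fun p => ((p.2.1, p.1), p.2.2)) with hρ₂
  have hm1 : Measurable (fun p : (X₁ × X₂) × Y₁ => ((p.2, p.1.2), p.1.1)) := by fun_prop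
  have hm2 : Measurable (fun p : X₂ × (Y₁ × Y₂) => ((p.2.1, p.1), p.2.2)) := by fun_prop
  have hρ₁p : IsProbabilityMeasure ρ₁ := Measure.isProbabilityMeasure_map hm1.aemeasurable
  have hρ₂p : IsProbabilityMeasure ρ₂ := Measure.isProbabilityMeasure_map hm2.aemeasurable
  have hfst1 : ρ₁.fst = f1.map (fun p => (p.2, p.1.2)) := by
    rw [hρ₁, Measure.fst, Measure.map_map measurable_fst hm1]
    rfl
  have hfst2 : ρ₂.fst = f2.map (fun p => (p.2.1, p.1)) := by
    rw [hρ₂, Measure.fst, Measure.map_map measurable_fst hm2]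
    rfl
  have hfst : ρ₁.fst = ρ₂.fst := by rw [hfst1, hfst2, h12]
  -- glue via conditional kernels
  set κ₁ := ρ₁.condKernel with hκ₁
  set κ₂ := ρ₂.condKernel with hκ₂
  set πt : Measure ((Y₁ × X₂) × (X₁ × Y₂)) := ρ₁.fst ⊗ₘ (κ₁ ×ₖ κ₂) with hπt
  have hh : Measurable (fun q : (Y₁ × X₂) × (X₁ × Y₂) =>
      ((q.2.1, q.1.2), (q.1.1, q.2.2))) := by fun_prop
  refine ⟨πt.map (fun q => ((q.2.1, q.1.2), (q.1.1, q.2.2))), ?_⟩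
  -- first marginal identity
  have hmap1 : (πt.map (fun q => ((q.2.1, q.1.2), (q.1.1, q.2.2)))).map
      (fun p => (p.1, p.2.1)) = f1 := by
    rw [Measure.map_map (by fun_prop) hh]
    have : ((fun p : (X₁ × X₂) × (Y₁ × Y₂) => (p.1, p.2.1)) ∘
        (fun q : (Y₁ × X₂) × (X₁ × Y₂) => ((q.2.1, q.1.2), (q.1.1, q.2.2))))
        = (fun r : (Y₁ × X₂) × X₁ => ((r.2, r.1.2), r.1.1)) ∘ (Prod.map id Prod.fst) := by
      ext q <;> rfl
    rw [this, ← Measure.map_map (by fun_prop) (measurable_id.prodMap measurable_fst),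
      hπt, compProd_map_right' _ _ measurable_fst]
    have hfk : (κ₁ ×ₖ κ₂).map Prod.fst = κ₁ := by
      rw [← Kernel.fst_eq, Kernel.fst_prod]
    rw [hfk, ρ₁.disintegrate ρ₁.condKernel, hρ₁,
      Measure.map_map (by fun_prop : Measurable (fun r : (Y₁ × X₂) × X₁ =>
        ((r.2, r.1.2), r.1.1))) hm1]
    have : ((fun r : (Y₁ × X₂) × X₁ => ((r.2, r.1.2), r.1.1)) ∘
        (fun p : (X₁ × X₂) × Y₁ => ((p.2, p.1.2), p.1.1))) = id := by
      ext p <;> rfl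
    rw [this, Measure.map_id]
  -- second marginal identity
  have hmap2 : (πt.map (fun q => ((q.2.1, q.1.2), (q.1.1, q.2.2)))).map
      (fun p => (p.1.2, p.2)) = f2 := by
    rw [Measure.map_map (by fun_prop) hh]
    have : ((fun p : (X₁ × X₂) × (Y₁ × Y₂) => (p.1.2, p.2)) ∘
        (fun q : (Y₁ × X₂) × (X₁ × Y₂) => ((q.2.1, q.1.2), (q.1.1, q.2.2))))
        = (fun r : (Y₁ × X₂) × Y₂ => (r.1.2, (r.1.1, r.2))) ∘ (Prod.map id Prod.snd) := by
      ext q <;> rfl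
    rw [this, ← Measure.map_map (by fun_prop) (measurable_id.prodMap measurable_snd),
      hπt, compProd_map_right' _ _ measurable_snd]
    have hsk : (κ₁ ×ₖ κ₂).map Prod.snd = κ₂ := by
      rw [← Kernel.snd_eq, Kernel.snd_prod]
    rw [hsk, hfst, ρ₂.disintegrate ρ₂.condKernel, hρ₂,
      Measure.map_map (by fun_prop : Measurable (fun r : (Y₁ × X₂) × Y₂ =>
        (r.1.2, (r.1.1, r.2)))) hm2]
    have : ((fun r : (Y₁ × X₂) × Y₂ => (r.1.2, (r.1.1, r.2))) ∘
        (fun p : X₂ × (Y₁ × Y₂) => ((p.2.1, p.1), p.2.2))) = id := by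
      ext p <;> rfl
    rw [this, Measure.map_id]
  refine ⟨⟨?_, ?_⟩, hmap1, hmap2⟩
  · have := congrArg (fun m => m.map Prod.fst) hmap1
    rw [Measure.map_map measurable_fst (by fun_prop)] at this
    rw [← h1, ← this]
    rfl
  · have := congrArg (fun m => m.map Prod.snd) hmap2
    rw [Measure.map_map measurable_snd (by fun_prop)] at this
    rw [← h2, ← this]
    rfl
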